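/- Let (Ω, P) be a probability space and T1, T2 : Ω → R measurable random variables that are exchangeable, i.e., the joint law of (T1, T2) equals the joint law of (T2, T1). Then E[exp(T1 - max(T1,T2))] = E[exp(T2 - max(T1,T2))] = (1 + E[exp(-|T1 - T2|)]) / 2. -/
import Mathlib


open MeasureTheory

theorem exchangeable_normalizing_constant
    {Ω : Type*} [MeasurableSpace Ω] (P : Measure Ω) [IsProbabilityMeasure P]
    (T1 T2 : Ω → ℝ) (hT1 : Measurable T1) (hT2 : Measurable T2)
    (hexch : P.map (fun ω => (T1 ω, T2 ω)) = P.map (fun ω => (T2 ω, T1 ω))) :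
    (∫ ω, Real.exp (T1 ω - max (T1 ω) (T2 ω)) ∂P
        = ∫ ω, Real.exp (T2 ω - max (T1 ω) (T2 ω)) ∂P) ∧
    ∫ ω, Real.exp (T1 ω - max (T1 ω) (T2 ω)) ∂P
        = (1 + ∫ ω, Real.exp (-|T1 ω - T2 ω|) ∂P) / 2 := by
  have hf : Measurable (fun p : ℝ × ℝ => Real.exp (p.1 - max p.1 p.2)) := by
    measurability
  have h12 : Measurable (fun ω => (T1 ω, T2 ω)) := hT1.prodMk hT2
  have h21 : Measurable (fun ω => (T2 ω, T1 ω)) := hT2.prodMk hT1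
  -- first equality
  have heq : ∫ ω, Real.exp (T1 ω - max (T1 ω) (T2 ω)) ∂P
      = ∫ ω, Real.exp (T2 ω - max (T1 ω) (T2 ω)) ∂P := by
    calc ∫ ω, Real.exp (T1 ω - max (T1 ω) (T2 ω)) ∂P
        = ∫ p, Real.exp (p.1 - max p.1 p.2) ∂(P.map (fun ω => (T1 ω, T2 ω))) := by
          rw [integral_map h12.aemeasurable hf.aestronglyMeasurable]
      _ = ∫ p, Real.exp (p.1 - max p.1 p.2) ∂(P.map (fun ω => (T2 ω, T1 ω))) := by
          rw [hexch]
      _ = ∫ ω, Real.exp (T2 ω - max (T2 ω) (T1 ω)) ∂P := by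
          rw [integral_map h21.aemeasurable hf.aestronglyMeasurable]
      _ = ∫ ω, Real.exp (T2 ω - max (T1 ω) (T2 ω)) ∂P := by
          simp_rw [max_comm]
  -- integrability
  have hint1 : Integrable (fun ω => Real.exp (T1 ω - max (T1 ω) (T2 ω))) P := by
    refine (integrable_const (1:ℝ)).mono' ?_ ?_
    · exact ((hT1.sub (hT1.max hT2)).exp).aestronglyMeasurable
    · filter_upwards with ω
      rw [Real.norm_eq_abs, abs_of_pos (Real.exp_pos _)]
      exact Real.exp_le_one_iff.2 (by simp [le_max_left])
  have hint2 : Integrable (fun ω => Real.exp (T2 ω - max (T1 ω) (T2 ω))) P := by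
    refine (integrable_const (1:ℝ)).mono' ?_ ?_
    · exact ((hT2.sub (hT1.max hT2)).exp).aestronglyMeasurable
    · filter_upwards with ω
      rw [Real.norm_eq_abs, abs_of_pos (Real.exp_pos _)]
      exact Real.exp_le_one_iff.2 (by simp [le_max_right])
  -- pointwise identity: exp(T1-max)+exp(T2-max) = 1 + exp(-|T1-T2|)
  have hpt : ∀ ω, Real.exp (T1 ω - max (T1 ω) (T2 ω))
      + Real.exp (T2 ω - max (T1 ω) (T2 ω)) = 1 + Real.exp (-|T1 ω - T2 ω|) := by
    intro ω
    rcases le_total (T1 ω) (T2 ω) with h | h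
    · rw [max_eq_right h, abs_of_nonpos (by linarith)]
      simp [neg_neg, add_comm]
    · rw [max_eq_left h, abs_of_nonneg (by linarith)]
      simp [add_comm]
  have hsum : ∫ ω, Real.exp (T1 ω - max (T1 ω) (T2 ω)) ∂P
      + ∫ ω, Real.exp (T2 ω - max (T1 ω) (T2 ω)) ∂P
      = 1 + ∫ ω, Real.exp (-|T1 ω - T2 ω|) ∂P := by
    rw [← integral_add hint1 hint2]
    simp_rw [hpt]
    rw [integral_add (integrable_const 1)]
    · simp
    · refine (integrable_const (1:ℝ)).mono' ?_ ?_
      · exact (((hT1.sub hT2).abs.neg).exp).aestronglyMeasurable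
      · filter_upwards with ω
        rw [Real.norm_eq_abs, abs_of_pos (Real.exp_pos _)]
        exact Real.exp_le_one_iff.2 (by simp [abs_nonneg])
  refine ⟨heq, ?_⟩
  rw [← heq] at hsum
  linarith
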